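/- arXiv:1111.7256 — 2 statements merged into one kernel-verified Lean document; each statement's English description precedes it below -/
import Mathlib

section
/- Let G be a topological group, let U and V be compact open subgroups of G, and let D(U) denote the largest normal pro-p subgroup (the p-core) of U. If V is a normal subgroup of U, then the p-core of U intersected with V equals the p-core of V; in particular the p-core of V has finite index in the p-core of U. -/
/-- A closed subgroup `S` of a topological group is pro-`p` if every open subgroup
of the ambient group has `p`-power relative index in `S`. -/
def IsProP {G : Type*} [Group G] [TopologicalSpace G] (p : ℕ) (S : Subgroup G) : Prop :=
  IsClosed (S : Set G) ∧ ∀ N : Subgroup G, IsOpen (N : Set G) → ∃ n : ℕ, N.relIndex S = p ^ n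

/-- `D` is the `p`-core of the subgroup `H`: the largest pro-`p` subgroup of `H`
normalised by all of `H`. -/
def IsPCoreIn {G : Type*} [Group G] [TopologicalSpace G] (p : ℕ) (H D : Subgroup G) : Prop :=
  D ≤ H ∧ IsProP p D ∧ (∀ h ∈ H, ∀ d ∈ D, h * d * h⁻¹ ∈ D) ∧
    ∀ N : Subgroup G, N ≤ H → (∀ h ∈ H, ∀ n ∈ N, h * n * h⁻¹ ∈ N) → IsProP p N → N ≤ D

/-- if `U`, `V` are compact open subgroups of a topological group with `V`
a normal subgroup of `U`, then `O_p(U) ∩ V = O_p(V)`; in particular `O_p(V)` has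
finite index in `O_p(U)`. -/
theorem pCore_inf_of_normal {G : Type*} [Group G] [TopologicalSpace G] [IsTopologicalGroup G]
    (p : ℕ) (hp : p.Prime)
    (U V : Subgroup G) (hUc : IsCompact (U : Set G)) (hUo : IsOpen (U : Set G))
    (hVc : IsCompact (V : Set G)) (hVo : IsOpen (V : Set G))
    (hVU : V ≤ U) (hVnorm : ∀ u ∈ U, ∀ v ∈ V, u * v * u⁻¹ ∈ V)
    (DU DV : Subgroup G) (hDU : IsPCoreIn p U DU) (hDV : IsPCoreIn p V DV) :
    DU ⊓ V = DV ∧ DV.relIndex DU ≠ 0 := by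
  obtain ⟨hDUle, ⟨hDUcl, hDUidx⟩, hDUnorm, hDUmax⟩ := hDU
  obtain ⟨hDVle, ⟨hDVcl, hDVidx⟩, hDVnorm, hDVmax⟩ := hDV
  have hVcl : IsClosed (V : Set G) := V.isClosed_of_isOpen hVo
  -- Step 1: DV is normalized by all of U (characteristic-type argument)
  have key : ∀ u ∈ U, ∀ d ∈ DV, u * d * u⁻¹ ∈ DV := by
    intro u hu d hd
    set c : G →* G := (MulAut.conj u).toMonoidHom with hc
    have hcfun : ∀ x : G, c x = u * x * u⁻¹ := fun x => rfl
    have hccont : Continuous c := by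
      show Continuous fun x : G => u * x * u⁻¹
      exact (continuous_mul_left u).mul continuous_const
    have hmap : DV.map c ≤ DV := by
      apply hDVmax
      · rintro x ⟨y, hy, rfl⟩
        exact hVnorm u hu y (hDVle hy)
      · rintro v hv x ⟨y, hy, rfl⟩
        refine ⟨(u⁻¹ * v * u) * y * (u⁻¹ * v * u)⁻¹, ?_, ?_⟩
        · have hv' : u⁻¹ * v * u ∈ V := by
            have := hVnorm u⁻¹ (inv_mem hu) v hv
            simpa using this
          exact hDVnorm _ hv' y hy
        · simp only [hcfun]
          group
      · constructor
        · have : (DV.map c : Set G) =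
              ((Homeomorph.mulLeft u).trans (Homeomorph.mulRight u⁻¹)) '' (DV : Set G) := by
            ext x
            simp only [Subgroup.coe_map, Homeomorph.trans_apply]
            rfl
          rw [this]
          exact ((Homeomorph.mulLeft u).trans (Homeomorph.mulRight u⁻¹)).isClosedMap _ hDVcl
        · intro N hN
          have hNopen : IsOpen ((N.comap c : Subgroup G) : Set G) := by
            have : ((N.comap c : Subgroup G) : Set G) = c ⁻¹' (N : Set G) := rfl
            rw [this]
            exact hN.preimage hccont
          obtain ⟨n, hn⟩ := hDVidx (N.comap c) hNopen
          exact ⟨n, by rw [← Subgroup.relIndex_comap]; exact hn⟩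
    exact hmap ⟨d, hd, rfl⟩
  have hDVDU : DV ≤ DU := hDUmax DV (hDVle.trans hVU) key ⟨hDVcl, hDVidx⟩
  -- Step 2: DU ⊓ V ≤ DV
  have h2 : DU ⊓ V ≤ DV := by
    apply hDVmax
    · exact inf_le_right
    · intro v hv n hn
      rw [Subgroup.mem_inf] at hn ⊢
      exact ⟨hDUnorm v (hVU hv) n hn.1, mul_mem (mul_mem hv hn.2) (inv_mem hv)⟩
    · constructor
      · have : ((DU ⊓ V : Subgroup G) : Set G) = (DU : Set G) ∩ (V : Set G) := rfl
        rw [this]; exact hDUcl.inter hVcl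
      · intro N hN
        obtain ⟨n, hn⟩ := hDUidx (N ⊓ V) (by rw [Subgroup.coe_inf]; exact hN.inter hVo)
        have e1 : N.relIndex (DU ⊓ V) = ((N ⊓ V) ⊓ DU).relIndex (DU ⊓ V) := by
          rw [← Subgroup.inf_relIndex_right]
          congr 1
          rw [inf_comm DU V, ← inf_assoc]
        have hle1 : (N ⊓ V) ⊓ DU ≤ DU ⊓ V :=
          le_inf inf_le_right (inf_le_left.trans inf_le_right)
        have hdvd : ((N ⊓ V) ⊓ DU).relIndex (DU ⊓ V) ∣ (N ⊓ V).relIndex DU := by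
          rw [← Subgroup.inf_relIndex_right (N ⊓ V) DU]
          exact ⟨(DU ⊓ V).relIndex DU,
            (Subgroup.relIndex_mul_relIndex _ _ _ hle1 inf_le_left).symm⟩
        rw [hn] at hdvd
        obtain ⟨i, -, hi⟩ := (Nat.dvd_prime_pow hp).mp hdvd
        exact ⟨i, by rw [e1, hi]⟩
  refine ⟨le_antisymm h2 (le_inf hDVDU hDVle), ?_⟩
  have hEq : DV = DU ⊓ V := (le_antisymm h2 (le_inf hDVDU hDVle)).symm
  rw [hEq, Subgroup.inf_relIndex_left]
  obtain ⟨n, hn⟩ := hDUidx V hVo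
  rw [hn]
  exact pow_ne_zero _ hp.pos.ne'
end

section
/- Let T be the k-regular tree (k ≥ 3) and let x be a hyperbolic automorphism of T with axis Π and translation length n. Let v be a vertex on Π and U the pointwise stabiliser of the segment [v, xv] in Aut(T) among automorphisms fixing v and xv. Then the actions of U on the two components of T minus the pair {interior directions} decompose: U = U₊U₋, where U₊ is the stabiliser of the ray from v towards the attracting end and U₋ is the stabiliser of the ray from xv towards the repelling end. -/
open Pointwise

theorem Equiv.Perm.apply_inv_self {α : Type*} (f : Equiv.Perm α) (x : α) : f (f⁻¹ x) = x :=
  f.apply_symm_apply x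

theorem Equiv.Perm.inv_apply_self {α : Type*} (f : Equiv.Perm α) (x : α) : f⁻¹ (f x) = x :=
  f.symm_apply_apply x

namespace TidyAux

open SimpleGraph

variable {V : Type*} {T : SimpleGraph V}

lemma map_getVert (f : T →g T) {s t : V} (p : T.Walk s t) (i : ℕ) :
    (p.map f).getVert i = f (p.getVert i) := by
  induction p generalizing i with
  | nil => simp [Walk.getVert, SimpleGraph.dist_self]
  | cons h q ih =>
    cases i with
    | zero => simp
    | succ i => simpa using ih i

lemma dist_start_getVert_le (hconn : T.Connected) {s t : V} (p : T.Walk s t) (i : ℕ) :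
    T.dist s (p.getVert i) ≤ i := by
  induction p generalizing i with
  | nil => simp [Walk.getVert, SimpleGraph.dist_self]
  | cons h q ih =>
    rename_i a b c
    cases i with
    | zero => simp
    | succ i =>
      rw [Walk.getVert_cons_succ]
      calc T.dist a (q.getVert i) ≤ T.dist a b + T.dist b (q.getVert i) := hconn.dist_triangle
        _ ≤ 1 + i := by
            have h1 : T.dist a b ≤ 1 := by
              simpa using T.dist_le (Walk.cons h Walk.nil)
            exact Nat.add_le_add h1 (ih i)
        _ = i + 1 := by omega

lemma dist_getVert_end_le {s t : V} (p : T.Walk s t) (i : ℕ) :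
    T.dist (p.getVert i) t ≤ p.length - i := by
  induction p generalizing i with
  | nil => simp [Walk.getVert, SimpleGraph.dist_self]
  | cons h q ih =>
    cases i with
    | zero =>
      simpa using T.dist_le (Walk.cons h q)
    | succ i =>
      rw [Walk.getVert_cons_succ]
      simpa using ih i

lemma dist_getVert_getVert_le (hconn : T.Connected) {s t : V} (p : T.Walk s t) {i j : ℕ}
    (hij : i ≤ j) : T.dist (p.getVert i) (p.getVert j) ≤ j - i := by
  induction p generalizing i j with
  | nil => simp [Walk.getVert, SimpleGraph.dist_self]
  | cons h q ih =>
    cases i with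
    | zero =>
      simpa using dist_start_getVert_le hconn (Walk.cons h q) j
    | succ i =>
      cases j with
      | zero => omega
      | succ j =>
        rw [Walk.getVert_cons_succ, Walk.getVert_cons_succ]
        simpa using ih (by omega : i ≤ j)

/-- On a geodesic, the distance between positions `i ≤ j ≤ length` is `j - i`. -/
lemma geodesic_dist (hconn : T.Connected) {s t : V} (p : T.Walk s t)
    (hL : p.length = T.dist s t) {i j : ℕ} (hij : i ≤ j) (hj : j ≤ p.length) :
    T.dist (p.getVert i) (p.getVert j) = j - i := by
  have h1 := dist_getVert_getVert_le hconn p hij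
  have h2 := dist_start_getVert_le hconn p i
  have h3 := dist_getVert_end_le p j
  have h4 : T.dist s t ≤ T.dist s (p.getVert i) + T.dist (p.getVert i) t :=
    hconn.dist_triangle
  have h5 : T.dist (p.getVert i) t ≤
      T.dist (p.getVert i) (p.getVert j) + T.dist (p.getVert j) t :=
    hconn.dist_triangle
  omega

lemma geodesic_dist_start (hconn : T.Connected) {s t : V} (p : T.Walk s t)
    (hL : p.length = T.dist s t) {i : ℕ} (hi : i ≤ p.length) :
    T.dist s (p.getVert i) = i := by
  have := geodesic_dist hconn p hL (Nat.zero_le i) hi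
  simpa using this

lemma geodesic_dist_end (hconn : T.Connected) {s t : V} (p : T.Walk s t)
    (hL : p.length = T.dist s t) {i : ℕ} (hi : i ≤ p.length) :
    T.dist (p.getVert i) t = p.length - i := by
  have := geodesic_dist hconn p hL hi (le_refl p.length)
  simpa [Walk.getVert_length] using this

/-- In an acyclic graph, any two paths between the same endpoints are equal as walks. -/
lemma path_eq (hacyc : T.IsAcyclic) {a b : V} {p q : T.Walk a b}
    (hp : p.IsPath) (hq : q.IsPath) : p = q := by
  have := hacyc.path_unique ⟨p, hp⟩ ⟨q, hq⟩
  exact congrArg Subtype.val this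

/-- In a tree, every path is a geodesic. -/
lemma path_length_eq_dist (hconn : T.Connected) (hacyc : T.IsAcyclic) {a b : V}
    {p : T.Walk a b} (hp : p.IsPath) : p.length = T.dist a b := by
  obtain ⟨q, hq⟩ := hconn.exists_walk_length_eq_dist a b
  have hqp : q.IsPath := q.isPath_of_length_eq_dist hq
  rw [path_eq hacyc hp hqp, hq]

/-- The graph homomorphism attached to an adjacency-preserving permutation. -/
def permHom (g : Equiv.Perm V) (hg : ∀ a b : V, T.Adj a b → T.Adj (g a) (g b)) : T →g T :=
  ⟨g, fun hab => hg _ _ hab⟩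

lemma dist_map_le (hconn : T.Connected) (g : Equiv.Perm V)
    (hg : ∀ a b : V, T.Adj a b → T.Adj (g a) (g b)) (a b : V) :
    T.dist (g a) (g b) ≤ T.dist a b := by
  obtain ⟨p, hp⟩ := hconn.exists_walk_length_eq_dist a b
  have := T.dist_le (p.map (permHom g hg))
  rwa [Walk.length_map, hp] at this

/-- An adjacency-preserving permutation preserves distances. -/
lemma dist_perm (hconn : T.Connected) (g : Equiv.Perm V)
    (hg : ∀ a b : V, T.Adj (g a) (g b) ↔ T.Adj a b) (a b : V) :
    T.dist (g a) (g b) = T.dist a b := by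
  have h1 : ∀ a b : V, T.Adj a b → T.Adj (g a) (g b) := fun a b hab => (hg a b).mpr hab
  have h2 : ∀ a b : V, T.Adj a b → T.Adj (g⁻¹ a) (g⁻¹ b) := by
    intro a b hab
    have := hg (g⁻¹ a) (g⁻¹ b)
    simp only [Equiv.Perm.apply_inv_self] at this
    exact this.mp hab
  refine le_antisymm (dist_map_le hconn g h1 a b) ?_
  have := dist_map_le hconn g⁻¹ h2 (g a) (g b)
  simpa using this

/-- In a tree, no vertex is equidistant from the two endpoints of an edge. -/
lemma no_equidistant (hconn : T.Connected) (hacyc : T.IsAcyclic) {a b : V}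
    (hab : T.Adj a b) (c : V) : T.dist c a ≠ T.dist c b := by
  intro he
  obtain ⟨r, hr⟩ := hconn.exists_walk_length_eq_dist c a
  have hrp : r.IsPath := r.isPath_of_length_eq_dist hr
  have hbr : b ∉ r.support := by
    intro hmem
    obtain ⟨i, hgi, hile⟩ := Walk.mem_support_iff_exists_getVert.mp hmem
    have h1 : T.dist c (r.getVert i) = i := geodesic_dist_start hconn r hr hile
    have h2 : T.dist (r.getVert i) a = r.length - i := geodesic_dist_end hconn r hr hile
    rw [hgi] at h1 h2
    have hieq : i = r.length := by omega
    have : T.dist b a = 0 := by omega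
    have := (hconn.dist_eq_zero_iff).mp this
    exact hab.ne' this
  have hW : (Walk.cons hab.symm r.reverse).IsPath :=
    hrp.reverse.cons (by rwa [Walk.support_reverse, List.mem_reverse])
  obtain ⟨q, hq⟩ := hconn.exists_walk_length_eq_dist b c
  have hqp : q.IsPath := q.isPath_of_length_eq_dist hq
  have := path_eq hacyc hW hqp
  have hlen := congrArg Walk.length this
  simp only [Walk.length_cons, Walk.length_reverse] at hlen
  have hcb : T.dist b c = T.dist c b := SimpleGraph.dist_comm
  rw [hr, hq] at hlen
  omega

/-- Unique neighbour in the direction of `t`. -/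
lemma unique_neighbor (hconn : T.Connected) (hacyc : T.IsAcyclic) {a w w' t : V}
    (h1 : T.Adj a w) (h2 : T.Adj a w') (hd1 : T.dist w t + 1 = T.dist a t)
    (hd2 : T.dist w' t + 1 = T.dist a t) : w = w' := by
  obtain ⟨q, hq⟩ := hconn.exists_walk_length_eq_dist w t
  obtain ⟨q', hq'⟩ := hconn.exists_walk_length_eq_dist w' t
  have hW : (Walk.cons h1 q).IsPath := by
    apply Walk.isPath_of_length_eq_dist
    simp [Walk.length_cons, hq]
    omega
  have hW' : (Walk.cons h2 q').IsPath := by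
    apply Walk.isPath_of_length_eq_dist
    simp [Walk.length_cons, hq']
    omega
  have heq := path_eq hacyc hW hW'
  have := congrArg (fun z => Walk.getVert z 1) heq
  simpa [Walk.getVert_cons_succ] using this

/-- The crossing lemma: the only edge between the two half-trees determined by the
edge `(v₀, v₁)` is the edge itself. -/
lemma crossing (hconn : T.Connected) (hacyc : T.IsAcyclic) {v₀ v₁ a b : V}
    (hadj : T.Adj v₀ v₁) (ha : T.dist a v₀ < T.dist a v₁)
    (hb : ¬ T.dist b v₀ < T.dist b v₁) (hab : T.Adj a b) : a = v₀ ∧ b = v₁ := by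
  have h01 : T.dist v₀ v₁ = 1 := SimpleGraph.dist_eq_one_iff_adj.mpr hadj
  have hone : T.dist a b = 1 := SimpleGraph.dist_eq_one_iff_adj.mpr hab
  set d := T.dist a v₀ with hd
  have haw : T.dist a v₁ = d + 1 := by
    have : T.dist a v₁ ≤ T.dist a v₀ + T.dist v₀ v₁ := hconn.dist_triangle
    omega
  have hbne := no_equidistant hconn hacyc hadj b
  have hb1 : T.dist b v₁ < T.dist b v₀ := by omega
  have hb2 : T.dist b v₀ ≤ d + 1 := by
    have : T.dist b v₀ ≤ T.dist b a + T.dist a v₀ := hconn.dist_triangle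
    have hba : T.dist b a = T.dist a b := SimpleGraph.dist_comm
    omega
  have hb3 : d ≤ T.dist b v₁ := by
    have : T.dist a v₁ ≤ T.dist a b + T.dist b v₁ := hconn.dist_triangle
    omega
  have hbv1 : T.dist b v₁ = d := by omega
  have hbv0 : T.dist b v₀ = d + 1 := by omega
  rcases Nat.eq_zero_or_pos d with hd0 | hdpos
  · refine ⟨hconn.dist_eq_zero_iff.mp (by omega), hconn.dist_eq_zero_iff.mp (by omega)⟩
  · exfalso
    obtain ⟨r, hrlen⟩ := hconn.exists_walk_length_eq_dist a v₀
    obtain ⟨q, hqlen⟩ := hconn.exists_walk_length_eq_dist b v₁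
    have hW1 : (r.append (Walk.cons hadj Walk.nil)).IsPath := by
      apply Walk.isPath_of_length_eq_dist
      simp [Walk.length_append, hrlen]
      omega
    have hW2 : (Walk.cons hab q).IsPath := by
      apply Walk.isPath_of_length_eq_dist
      simp [Walk.length_cons, hqlen]
      omega
    have heq := path_eq hacyc hW1 hW2
    have h1 := congrArg (fun z => Walk.getVert z 1) heq
    simp only [Walk.getVert_cons_succ, Walk.getVert_zero] at h1
    rw [Walk.getVert_append] at h1
    by_cases hlt : 1 < r.length
    · rw [if_pos hlt] at h1
      have := geodesic_dist_end hconn r hrlen (i := 1) (by omega)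
      rw [h1] at this
      omega
    · rw [if_neg hlt] at h1
      have hr1 : r.length = 1 := by omega
      have : (Walk.cons hadj (Walk.nil : T.Walk v₁ v₁)).getVert (1 - r.length) = v₀ := by
        rw [hr1]
        simp [Walk.getVert_zero]
      rw [this] at h1
      rw [← h1] at hbv0
      rw [SimpleGraph.dist_self] at hbv0
      omega

/-- Gluing two paths whose supports meet only at the junction point gives a path. -/
lemma append_path {a b c : V} {P : T.Walk a b} {q : T.Walk b c}
    (hP : P.IsPath) (hq : q.IsPath)
    (hdisj : ∀ y, y ∈ P.support → y ∈ q.support → y = b) :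
    (P.append q).IsPath := by
  rw [Walk.isPath_def, Walk.support_append, List.nodup_append]
  have hqsupp := q.support_eq_cons
  have hqnodup : q.support.Nodup := hq.support_nodup
  rw [hqsupp, List.nodup_cons] at hqnodup
  refine ⟨hP.support_nodup, hqnodup.2, ?_⟩
  intro y hy1 y' hy2 hyy
  subst hyy
  have hy2' : y ∈ q.support := by rw [hqsupp]; exact List.mem_cons_of_mem _ hy2
  have := hdisj y hy1 hy2'
  subst this
  exact hqnodup.1 hy2

/-- In the tree, `dist v ((x^m) v) = m * dist v (x v)` for a hyperbolic `x` whose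
displacement is minimised at `v`. -/
lemma axis_dist (hconn : T.Connected) (hacyc : T.IsAcyclic)
    (x : Equiv.Perm V) (hx : ∀ m : ℕ, ∀ a b : V, T.Adj ((x ^ m) a) ((x ^ m) b) ↔ T.Adj a b)
    (hnoinv : ∀ w : V, ¬ (T.Adj w (x w) ∧ x (x w) = w))
    (v : V) (hv : ∀ w : V, T.dist v (x v) ≤ T.dist w (x w)) (hvne : x v ≠ v)
    (m : ℕ) : T.dist v ((x ^ m) v) = m * T.dist v (x v) := by
  set n := T.dist v (x v) with hn
  have hn1 : 1 ≤ n := hconn.pos_dist_of_ne (fun h => hvne h.symm)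
  -- distance preservation by powers of x
  have hdp : ∀ (r : ℕ) (a b : V), T.dist ((x ^ r) a) ((x ^ r) b) = T.dist a b :=
    fun r => dist_perm hconn (x ^ r) (hx r)
  have hd1 : ∀ a b : V, T.dist (x a) (x b) = T.dist a b := by
    have := hdp 1
    simpa [pow_one] using this
  -- the homs
  have hxhom : ∀ (r : ℕ) (a b : V), T.Adj a b → T.Adj ((x ^ r) a) ((x ^ r) b) :=
    fun r a b hab => (hx r a b).mpr hab
  -- geodesic from v to x v
  obtain ⟨p, hp⟩ := hconn.exists_walk_length_eq_dist v (x v)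
  have hpPath : p.IsPath := p.isPath_of_length_eq_dist hp
  have hplen : p.length = n := hp
  -- main claim by strong induction
  suffices h : ∀ m : ℕ, ∃ P : T.Walk v ((x ^ m) v), P.IsPath ∧ P.length = m * n ∧
      ∀ r : ℕ, r ≤ m → ((x ^ r) v) ∈ P.support by
    obtain ⟨P, hP1, hP2, _⟩ := h m
    rw [← path_length_eq_dist hconn hacyc hP1, hP2]
  intro m
  induction m using Nat.strong_induction_on with
  | _ m ih =>
    match m, ih with
    | 0, ih =>
      refine ⟨Walk.nil.copy rfl (by simp), by simp, by simp, ?_⟩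
      intro r hr
      interval_cases r
      simp
    | 1, ih =>
      refine ⟨p.copy rfl (by simp), by simpa using hpPath, by simpa using hplen, ?_⟩
      intro r hr
      interval_cases r
      · simp only [Walk.support_copy, pow_zero]
        simpa using p.start_mem_support
      · simp only [Walk.support_copy, pow_one]
        exact p.end_mem_support
    | (m + 2), ih =>
      obtain ⟨P', hP'path, hP'len, hP'supp⟩ := ih (m + 1) (by omega)
      have hgeoP' : P'.length = T.dist v ((x ^ (m + 1)) v) :=
        path_length_eq_dist hconn hacyc hP'path
      have hq0 : ((x ^ (m + 1)) (x v)) = (x ^ (m + 2)) v := by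
        rw [pow_succ x (m + 1), Equiv.Perm.mul_apply]
      set q : T.Walk ((x ^ (m + 1)) v) ((x ^ (m + 2)) v) :=
        (p.map (permHom (x ^ (m + 1)) (hxhom (m + 1)))).copy (by rfl) hq0 with hqdef
      have hqgetVert : ∀ i : ℕ, q.getVert i = (x ^ (m + 1)) (p.getVert i) := by
        intro i
        rw [hqdef]
        exact (Walk.getVert_copy ..).trans (map_getVert _ p i)
      have hqlen : q.length = n := by
        rw [hqdef]
        exact (Walk.length_copy ..).trans ((Walk.length_map ..).trans hplen)
      have hqpath : q.IsPath := by
        rw [hqdef]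
        refine (Walk.isPath_copy ..).mpr ?_
        exact Walk.map_isPath_of_injective
          (fun _ _ h => (x ^ (m + 1)).injective h) hpPath
      -- junction condition
      have hjunction : ∀ y, y ∈ P'.support → y ∈ q.support → y = (x ^ (m + 1)) v := by
        intro y hy1 hy2
        obtain ⟨i, hgi, hile⟩ := Walk.mem_support_iff_exists_getVert.mp hy1
        obtain ⟨j, hgj, hjle⟩ := Walk.mem_support_iff_exists_getVert.mp hy2
        rw [hqlen] at hjle
        rw [hqgetVert] at hgj
        -- dist y (x^(m+1) v) computed two ways
        have e1 : T.dist y ((x ^ (m + 1)) v) = P'.length - i := by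
          rw [← hgi]
          exact geodesic_dist_end hconn P' hgeoP' hile
        have e2 : T.dist y ((x ^ (m + 1)) v) = j := by
          rw [← hgj, hdp, SimpleGraph.dist_comm]
          exact geodesic_dist_start hconn p hp (by omega)
        have hP'lenval : P'.length = (m + 1) * n := hP'len
        have hij : i + j = (m + 1) * n := by omega
        rcases Nat.eq_zero_or_pos m with hm0 | hmpos
        · -- total translate 2 : use minimality of displacement and no inversion
          subst hm0
          -- P' coincides with p (after a copy)
          have hcopypath : (p.copy rfl (by simp : x v = (x ^ (0 + 1)) v)).IsPath := by
            simpa using hpPath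
          have hP'p : P' = p.copy rfl (by simp) := path_eq hacyc hP'path hcopypath
          have hgi' : p.getVert i = y := by
            rw [hP'p, Walk.getVert_copy] at hgi
            exact hgi
          have hgj' : x (p.getVert j) = y := by
            rw [← hgj]
            simp [pow_one]
          have hile' : i ≤ n := by
            have := hP'lenval
            omega
          -- displacement of p.getVert j
          have hdisp : T.dist (p.getVert j) (x (p.getVert j)) = i - j ∨
              T.dist (p.getVert j) (x (p.getVert j)) = j - i := by
            rw [hgj', ← hgi']
            rcases le_total j i with hji | hij'
            · left
              exact geodesic_dist hconn p hp hji (by omega)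
            · right
              rw [SimpleGraph.dist_comm]
              exact geodesic_dist hconn p hp hij' (by omega)
          have hmin := hv (p.getVert j)
          have hcases : (i = 0 ∧ j = n) ∨ (i = n ∧ j = 0) := by omega
          rcases hcases with ⟨hi0, hjn⟩ | ⟨hin, hj0⟩
          · -- then x (x v) = v : excluded
            exfalso
            have hpn : p.getVert n = x v := by
              rw [← hplen]
              exact p.getVert_length
            have hyv : y = v := by
              rw [← hgi', hi0]
              exact p.getVert_zero
            have hx2 : x (x v) = v := by
              have hxx : x (p.getVert j) = v := by rw [hgj']; exact hyv
              rwa [hjn, hpn] at hxx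
            rcases Nat.lt_or_ge n 2 with hn2 | hn2
            · -- n = 1 : inverted edge
              have hn1' : n = 1 := by omega
              have hadj : T.Adj v (x v) := by
                have := p.adj_getVert_succ (i := 0) (by omega)
                rw [p.getVert_zero] at this
                have h1 : p.getVert 1 = x v := by
                  rw [hn1'] at hpn
                  exact hpn
                rwa [h1] at this
              exact hnoinv v ⟨hadj, hx2⟩
            · -- n ≥ 2 : the midpoint has smaller displacement
              have hxmap : ∀ a b : V, T.Adj a b → T.Adj (x a) (x b) := by
                intro a b hab
                have := hxhom 1 a b hab
                simpa [pow_one] using this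
              have hW : ((p.map (permHom x hxmap)).copy (by rfl) hx2).IsPath := by
                refine (Walk.isPath_copy ..).mpr ?_
                exact Walk.map_isPath_of_injective (fun _ _ h => x.injective h) hpPath
              have hrev : p.reverse.IsPath := hpPath.reverse
              have heqw := path_eq hacyc hW hrev
              have h1 := congrArg (fun z => Walk.getVert z 1) heqw
              replace h1 : (permHom x hxmap) (p.getVert 1) = p.reverse.getVert 1 :=
                (map_getVert _ p 1).symm.trans ((Walk.getVert_copy ..).symm.trans h1)
              rw [Walk.getVert_reverse] at h1
              have hxp1 : x (p.getVert 1) = p.getVert (p.length - 1) := h1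
              have hdist2 : T.dist (p.getVert 1) (x (p.getVert 1)) = n - 2 := by
                rw [hxp1]
                have := geodesic_dist hconn p hp (i := 1) (j := p.length - 1)
                  (by omega) (by omega)
                rw [this]
                omega
              have := hv (p.getVert 1)
              rw [hdist2] at this
              omega
          · -- shared vertex is the junction
            rw [← hgj', hj0, p.getVert_zero]
            simp [pow_one]
        · -- general case : use the previous junction x^m v
          have hkmem := hP'supp m (by omega)
          obtain ⟨k, hgk, hkle⟩ := Walk.mem_support_iff_exists_getVert.mp hkmem
          have hkval : k = m * n := by
            have h1 : T.dist v (P'.getVert k) = k :=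
              geodesic_dist_start hconn P' hgeoP' hkle
            obtain ⟨Pm, hPmpath, hPmlen, _⟩ := ih m (by omega)
            have h2 : T.dist v ((x ^ m) v) = m * n := by
              rw [← path_length_eq_dist hconn hacyc hPmpath, hPmlen]
            rw [hgk, h2] at h1
            omega
          -- dist (x p_j) v = n + j
          obtain ⟨P2, hP2path, hP2len, _⟩ := ih 2 (by omega)
          have hd2 : T.dist v ((x ^ 2) v) = 2 * n := by
            rw [← path_length_eq_dist hconn hacyc hP2path, hP2len]
          have hdpj : T.dist (x (p.getVert j)) v = n + j := by
            have hub : T.dist (x (p.getVert j)) v ≤ n + j := by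
              have ht : T.dist (x (p.getVert j)) v ≤
                  T.dist (x (p.getVert j)) (x v) + T.dist (x v) v := hconn.dist_triangle
              have h3 : T.dist (x (p.getVert j)) (x v) = T.dist (p.getVert j) v := hd1 _ _
              have h4 : T.dist (p.getVert j) v = j := by
                rw [SimpleGraph.dist_comm]
                exact geodesic_dist_start hconn p hp (by omega)
              have h5 : T.dist (x v) v = n := by
                rw [SimpleGraph.dist_comm]
              omega
            have hlb : n + j ≤ T.dist (x (p.getVert j)) v := by
              have ht : T.dist v ((x ^ 2) v) ≤
                  T.dist v (x (p.getVert j)) + T.dist (x (p.getVert j)) ((x ^ 2) v) :=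
                hconn.dist_triangle
              have h6 : (x ^ 2) v = x (x v) := by
                rw [pow_two]
                simp [Equiv.Perm.mul_apply]
              have h7 : T.dist (x (p.getVert j)) ((x ^ 2) v) = n - j := by
                rw [h6, hd1]
                have := geodesic_dist_end hconn p hp (i := j) (by omega)
                rw [this]
                omega
              have h8 : T.dist v (x (p.getVert j)) = T.dist (x (p.getVert j)) v :=
                SimpleGraph.dist_comm
              omega
            omega
          -- dist y (x^m v) computed two ways
          have e3 : T.dist y ((x ^ m) v) = n + j := by
            have hsplit : (x ^ (m + 1)) (p.getVert j) = (x ^ m) (x (p.getVert j)) := by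
              rw [pow_succ]
              simp [Equiv.Perm.mul_apply]
            rw [← hgj, hsplit, hdp]
            exact hdpj
          have e4 : T.dist y ((x ^ m) v) = i - k ∨ T.dist y ((x ^ m) v) = k - i := by
            rw [← hgi, ← hgk]
            rcases le_total k i with hki | hik
            · left
              rw [SimpleGraph.dist_comm]
              exact geodesic_dist hconn P' hgeoP' hki hile
            · right
              exact geodesic_dist hconn P' hgeoP' hik hkle
          have hij' : i + j = m * n + n := by
            have : (m + 1) * n = m * n + n := by ring
            omega
          have hilen' : i ≤ m * n + n := by
            have : (m + 1) * n = m * n + n := by ring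
            omega
          have hj0 : j = 0 := by omega
          rw [← hgj, hj0, p.getVert_zero]
      -- assemble
      refine ⟨P'.append q, append_path hP'path hqpath hjunction, ?_, ?_⟩
      · rw [Walk.length_append, hP'len, hqlen]
        ring
      · intro r hr
        rcases Nat.lt_or_ge r (m + 2) with hrlt | hrge
        · have := hP'supp r (by omega)
          exact Walk.subset_support_append_left _ _ this
        · have hrm : r = m + 2 := by omega
          subst hrm
          exact (P'.append q).end_mem_support

end TidyAux

open TidyAux SimpleGraph in
/-- let `T` be the `k`-regular tree (`k ≥ 3`), `A ≤ Sym(V)` its automorphism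
group, and `x ∈ A` a hyperbolic automorphism (no fixed vertex and no inverted edge).
Let `v` be a vertex on the axis of `x` (a vertex of minimal displacement), and let
`U = A ∩ Stab(v) ∩ Stab(xv)`. Then `U = U₊U₋` where `U₊ = ⋂_{i ≥ 0} xⁱUx⁻ⁱ` and
`U₋ = ⋂_{i ≤ 0} xⁱUx⁻ⁱ`. -/
theorem tidy_factorisation_for_hyperbolic {V : Type*} (T : SimpleGraph V)
    (k : ℕ) (hk : 3 ≤ k) (hreg : ∀ w : V, (T.neighborSet w).ncard = k)
    (hconn : T.Connected) (hacyc : T.IsAcyclic)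
    (A : Subgroup (Equiv.Perm V))
    (hA : ∀ g : Equiv.Perm V, g ∈ A ↔ ∀ a b : V, T.Adj (g a) (g b) ↔ T.Adj a b)
    (x : Equiv.Perm V) (hxA : x ∈ A)
    (hnofix : ∀ w : V, x w ≠ w)
    (hnoinv : ∀ w : V, ¬ (T.Adj w (x w) ∧ x (x w) = w))
    (v : V) (hv : ∀ w : V, T.dist v (x v) ≤ T.dist w (x w))
    (U Uplus Uminus : Subgroup (Equiv.Perm V))
    (hU : U = A ⊓ MulAction.stabilizer (Equiv.Perm V) v ⊓
      MulAction.stabilizer (Equiv.Perm V) (x v))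
    (hUp : Uplus = ⨅ i : ℕ, U.map (MulAut.conj (x ^ (i : ℤ))).toMonoidHom)
    (hUm : Uminus = ⨅ i : ℕ, U.map (MulAut.conj (x ^ (-(i : ℤ)))).toMonoidHom) :
    (U : Set (Equiv.Perm V)) = (Uplus : Set (Equiv.Perm V)) * (Uminus : Set (Equiv.Perm V)) := by
  have hAd : ∀ g ∈ A, ∀ a b : V, T.dist (g a) (g b) = T.dist a b := by
    intro g hg a b
    exact dist_perm hconn g ((hA g).mp hg) a b
  set n := T.dist v (x v) with hn
  have hvne : x v ≠ v := hnofix v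
  have hn1 : 1 ≤ n := hconn.pos_dist_of_ne (fun h => hvne h.symm)
  have hxpow : ∀ m : ℕ, (x ^ m) ∈ A := fun m => pow_mem hxA m
  have hxmemAdj : ∀ m : ℕ, ∀ a b : V, T.Adj ((x ^ m) a) ((x ^ m) b) ↔ T.Adj a b :=
    fun m => (hA _).mp (hxpow m)
  have haxis : ∀ m : ℕ, T.dist v ((x ^ m) v) = m * n :=
    axis_dist hconn hacyc x hxmemAdj hnoinv v hv hvne
  -- geodesic from v to x v and its first step w₁
  obtain ⟨p, hp⟩ := hconn.exists_walk_length_eq_dist v (x v)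
  have hplen : p.length = n := hp
  set w₁ := p.getVert 1 with hw1def
  have hadj : T.Adj v w₁ := by
    have := p.adj_getVert_succ (i := 0) (by omega)
    rwa [p.getVert_zero] at this
  have hw1x : T.dist w₁ (x v) = n - 1 := by
    have := geodesic_dist_end hconn p hp (i := 1) (by omega)
    rw [hplen] at this
    exact this
  have hw1v : T.dist v w₁ = 1 := SimpleGraph.dist_eq_one_iff_adj.mpr hadj
  -- membership facts for the half-tree S = {w | dist w v < dist w w₁}
  have hvS : T.dist v v < T.dist v w₁ := by
    rw [SimpleGraph.dist_self, hw1v]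
    omega
  have hxv_pow_notS : ∀ i : ℕ, 1 ≤ i → ¬ T.dist ((x ^ i) v) v < T.dist ((x ^ i) v) w₁ := by
    intro i hi
    obtain ⟨i', rfl⟩ : ∃ i', i = i' + 1 := ⟨i - 1, by omega⟩
    set w := (x ^ (i' + 1)) v with hwdef
    have hd1 : T.dist w v = (i' + 1) * n := by
      rw [SimpleGraph.dist_comm]
      exact haxis (i' + 1)
    have hdxv : T.dist w (x v) = i' * n := by
      have hW : w = x ((x ^ i') v) := by
        rw [hwdef, pow_succ' x i', Equiv.Perm.mul_apply]
      rw [hW, hAd x hxA, SimpleGraph.dist_comm]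
      exact haxis i'
    have htri : T.dist w w₁ ≤ T.dist w (x v) + T.dist (x v) w₁ := hconn.dist_triangle
    have hc : T.dist (x v) w₁ = n - 1 := by
      rw [SimpleGraph.dist_comm]
      exact hw1x
    have hexp : (i' + 1) * n = n + i' * n := by ring
    omega
  have hxv_inv_S : ∀ i : ℕ, 1 ≤ i →
      T.dist ((x ^ i)⁻¹ v) v < T.dist ((x ^ i)⁻¹ v) w₁ := by
    intro i hi
    set w := (x ^ i)⁻¹ v with hwdef
    have hd1 : T.dist w v = i * n := by
      have := hAd (x ^ i) (hxpow i) w v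
      rw [hwdef] at this ⊢
      rw [Equiv.Perm.apply_inv_self] at this
      rw [← this]
      exact haxis i
    have hd2 : T.dist w (x v) = (i + 1) * n := by
      have := hAd (x ^ i) (hxpow i) w (x v)
      rw [hwdef] at this ⊢
      rw [Equiv.Perm.apply_inv_self] at this
      have hxx : (x ^ i) (x v) = (x ^ (i + 1)) v := by
        rw [pow_succ x i, Equiv.Perm.mul_apply]
      rw [hxx] at this
      rw [← this]
      exact haxis (i + 1)
    have htri : T.dist w (x v) ≤ T.dist w w₁ + T.dist w₁ (x v) := hconn.dist_triangle
    have hexp : (i + 1) * n = i * n + n := by ring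
    omega
  -- now prove the two inclusions
  ext s
  simp only [SetLike.mem_coe]
  constructor
  · -- the hard direction : factorise s = s₊ s₋
    intro hs
    rw [hU, Subgroup.mem_inf, Subgroup.mem_inf] at hs
    obtain ⟨⟨huA, huv⟩, huxv⟩ := hs
    rw [MulAction.mem_stabilizer_iff, Equiv.Perm.smul_def] at huv huxv
    have huA' : s⁻¹ ∈ A := A.inv_mem huA
    have huv' : s⁻¹ v = v := by
      conv_lhs => rw [← huv]
      exact s.inv_apply_self v
    have huxv' : s⁻¹ (x v) = x v := by
      conv_lhs => rw [← huxv]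
      exact s.inv_apply_self (x v)
    -- s fixes w₁
    have hsw₁ : s w₁ = w₁ := by
      apply unique_neighbor hconn hacyc (a := v) (t := x v)
      · have := ((hA s).mp huA v w₁).mpr hadj
        rwa [huv] at this
      · exact hadj
      · have h1 : T.dist (s w₁) (x v) = T.dist w₁ (x v) := by
          conv_lhs => rw [← huxv]
          exact hAd s huA w₁ (x v)
        rw [h1, hw1x]
        omega
      · rw [hw1x]
        omega
    have hsw₁' : s⁻¹ w₁ = w₁ := by
      conv_lhs => rw [← hsw₁]
      exact s.inv_apply_self w₁
    -- s and s⁻¹ preserve the half-tree condition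
    have hSpres : ∀ (h : Equiv.Perm V), h ∈ A → h v = v → h w₁ = w₁ → ∀ w : V,
        (T.dist (h w) v < T.dist (h w) w₁ ↔ T.dist w v < T.dist w w₁) := by
      intro h hhA hhv hhw w
      have h1 : T.dist (h w) v = T.dist w v := by
        conv_lhs => rw [← hhv]
        exact hAd h hhA w v
      have h2 : T.dist (h w) w₁ = T.dist w w₁ := by
        conv_lhs => rw [← hhw]
        exact hAd h hhA w w₁
      rw [h1, h2]
    -- the piecewise permutation
    set f : V → V := fun w => if T.dist w v < T.dist w w₁ then s w else w with hfdef
    set g : V → V := fun w => if T.dist w v < T.dist w w₁ then s⁻¹ w else w with hgdef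
    have hgf : ∀ w, g (f w) = w := by
      intro w
      by_cases hw : T.dist w v < T.dist w w₁
      · rw [hfdef, hgdef]
        simp only [if_pos hw]
        rw [if_pos ((hSpres s huA huv hsw₁ w).mpr hw)]
        exact s.inv_apply_self w
      · rw [hfdef, hgdef]
        simp only [if_neg hw]
    have hfg : ∀ w, f (g w) = w := by
      intro w
      by_cases hw : T.dist w v < T.dist w w₁
      · rw [hfdef, hgdef]
        simp only [if_pos hw]
        rw [if_pos ((hSpres s⁻¹ huA' huv' hsw₁' w).mpr hw)]
        exact s.apply_inv_self w
      · rw [hfdef, hgdef]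
        simp only [if_neg hw]
    set uplus : Equiv.Perm V := ⟨f, g, hgf, hfg⟩ with hupdef
    have hup_apply : ∀ w, uplus w = if T.dist w v < T.dist w w₁ then s w else w :=
      fun w => rfl
    have hupinv_apply : ∀ w, uplus⁻¹ w = if T.dist w v < T.dist w w₁ then s⁻¹ w else w :=
      fun w => rfl
    -- uplus is an automorphism
    have hkey : ∀ (h : Equiv.Perm V), h ∈ A → h v = v → h w₁ = w₁ → ∀ a b : V, T.Adj a b →
        T.Adj (if T.dist a v < T.dist a w₁ then h a else a)
          (if T.dist b v < T.dist b w₁ then h b else b) := by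
      intro h hhA hhv hhw a b hab
      by_cases ha : T.dist a v < T.dist a w₁
      · by_cases hb : T.dist b v < T.dist b w₁
        · rw [if_pos ha, if_pos hb]
          exact ((hA h).mp hhA a b).mpr hab
        · obtain ⟨hav, hbw⟩ := crossing hconn hacyc hadj ha hb hab
          rw [if_pos ha, if_neg hb, hav, hbw, hhv]
          exact hadj
      · by_cases hb : T.dist b v < T.dist b w₁
        · obtain ⟨hbv, haw⟩ := crossing hconn hacyc hadj hb ha hab.symm
          rw [if_neg ha, if_pos hb, hbv, haw, hhv]
          exact hadj.symm
        · rw [if_neg ha, if_neg hb]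
          exact hab
    have hupA : uplus ∈ A := by
      rw [hA]
      intro a b
      constructor
      · intro h1
        have h2 := hkey s⁻¹ huA' huv' hsw₁' (uplus a) (uplus b) h1
        have h3 : (if T.dist (uplus a) v < T.dist (uplus a) w₁ then s⁻¹ (uplus a)
            else uplus a) = a := by
          rw [← hupinv_apply]
          exact uplus.inv_apply_self a
        have h4 : (if T.dist (uplus b) v < T.dist (uplus b) w₁ then s⁻¹ (uplus b)
            else uplus b) = b := by
          rw [← hupinv_apply]
          exact uplus.inv_apply_self b
        rwa [h3, h4] at h2
      · intro h1
        have h2 := hkey s huA huv hsw₁ a b h1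
        rwa [← hup_apply a, ← hup_apply b] at h2
    -- fixed vertices of uplus
    have hup_pow : ∀ m : ℕ, uplus ((x ^ m) v) = (x ^ m) v := by
      intro m
      rcases Nat.eq_zero_or_pos m with hm | hm
      · subst hm
        simp only [pow_zero, Equiv.Perm.coe_one, id_eq]
        rw [hup_apply, if_pos hvS]
        exact huv
      · rw [hup_apply, if_neg (hxv_pow_notS m hm)]
    -- the complementary factor
    set uminus : Equiv.Perm V := uplus⁻¹ * s with humdef
    have hum_apply : ∀ w, uminus w = uplus⁻¹ (s w) := fun w => rfl
    have hum_fix : ∀ w : V, T.dist w v < T.dist w w₁ → uminus w = w := by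
      intro w hw
      rw [hum_apply, hupinv_apply, if_pos ((hSpres s huA huv hsw₁ w).mpr hw)]
      exact s.inv_apply_self w
    have hum_xv : uminus (x v) = x v := by
      rw [hum_apply, huxv, hupinv_apply]
      rw [if_neg]
      have := hxv_pow_notS 1 le_rfl
      simpa [pow_one] using this
    have hum_v : uminus v = v := hum_fix v hvS
    have hum_pow : ∀ m : ℕ, uminus ((x ^ m)⁻¹ v) = (x ^ m)⁻¹ v := by
      intro m
      rcases Nat.eq_zero_or_pos m with hm | hm
      · subst hm
        simpa using hum_v
      · exact hum_fix _ (hxv_inv_S m hm)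
    -- memberships
    have hupmem : uplus ∈ Uplus := by
      rw [hUp, Subgroup.mem_iInf]
      intro i
      rw [Subgroup.mem_map]
      refine ⟨(x ^ (i : ℤ))⁻¹ * uplus * (x ^ (i : ℤ)), ?_, ?_⟩
      · have hz : (x ^ (i : ℤ)) = x ^ i := zpow_natCast x i
        rw [hU, Subgroup.mem_inf, Subgroup.mem_inf]
        refine ⟨⟨?_, ?_⟩, ?_⟩
        · exact A.mul_mem (A.mul_mem (A.inv_mem (A.zpow_mem hxA _)) hupA) (A.zpow_mem hxA _)
        · rw [MulAction.mem_stabilizer_iff, Equiv.Perm.smul_def]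
          rw [hz]
          simp only [Equiv.Perm.mul_apply]
          rw [hup_pow i]
          exact (x ^ i).inv_apply_self v
        · rw [MulAction.mem_stabilizer_iff, Equiv.Perm.smul_def]
          rw [hz]
          simp only [Equiv.Perm.mul_apply]
          have hxx : (x ^ i) (x v) = (x ^ (i + 1)) v := by
            rw [pow_succ x i, Equiv.Perm.mul_apply]
          rw [hxx, hup_pow (i + 1), ← hxx]
          exact (x ^ i).inv_apply_self (x v)
      · simp only [MulEquiv.toMonoidHom_eq_coe, MonoidHom.coe_coe, MulAut.conj_apply]
        group
    have hummem : uminus ∈ Uminus := by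
      rw [hUm, Subgroup.mem_iInf]
      intro i
      rw [Subgroup.mem_map]
      refine ⟨(x ^ (-(i : ℤ)))⁻¹ * uminus * (x ^ (-(i : ℤ))), ?_, ?_⟩
      · have hz : (x ^ (-(i : ℤ))) = (x ^ i)⁻¹ := by
          rw [zpow_neg, zpow_natCast]
        rw [hU, Subgroup.mem_inf, Subgroup.mem_inf]
        refine ⟨⟨?_, ?_⟩, ?_⟩
        · exact A.mul_mem (A.mul_mem (A.inv_mem (A.zpow_mem hxA _))
            (A.mul_mem (A.inv_mem hupA) huA)) (A.zpow_mem hxA _)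
        · rw [MulAction.mem_stabilizer_iff, Equiv.Perm.smul_def]
          rw [hz]
          simp only [Equiv.Perm.mul_apply]
          rw [hum_pow i]
          exact ((x ^ i)⁻¹).inv_apply_self v
        · rw [MulAction.mem_stabilizer_iff, Equiv.Perm.smul_def]
          rw [hz]
          simp only [Equiv.Perm.mul_apply]
          rcases Nat.eq_zero_or_pos i with hi | hi
          · subst hi
            simpa using hum_xv
          · have hxx : (x ^ i)⁻¹ (x v) = (x ^ (i - 1))⁻¹ v := by
              obtain ⟨i', rfl⟩ := Nat.exists_eq_add_of_le hi
              have hgrp : (x ^ (1 + i'))⁻¹ * x = (x ^ (1 + i' - 1))⁻¹ := by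
                have : 1 + i' - 1 = i' := by omega
                rw [this]
                group
              calc (x ^ (1 + i'))⁻¹ (x v) = ((x ^ (1 + i'))⁻¹ * x) v := rfl
                _ = (x ^ (1 + i' - 1))⁻¹ v := by rw [hgrp]
            rw [hxx, hum_pow (i - 1), ← hxx]
            exact ((x ^ i)⁻¹).inv_apply_self (x v)
      · simp only [MulEquiv.toMonoidHom_eq_coe, MonoidHom.coe_coe, MulAut.conj_apply]
        group
    exact ⟨uplus, hupmem, uminus, hummem, by rw [humdef]; group⟩
  · -- the easy direction
    intro hs
    obtain ⟨a, ha, b, hb, rfl⟩ := hs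
    have hUple : ∀ c : Equiv.Perm V, c ∈ Uplus → c ∈ U := by
      intro c hc
      rw [hUp, Subgroup.mem_iInf] at hc
      have := hc 0
      rw [Subgroup.mem_map] at this
      obtain ⟨y, hy, hconj⟩ := this
      have : y = c := by
        simpa [MulAut.conj_apply] using hconj
      rwa [← this]
    have hUmle : ∀ c : Equiv.Perm V, c ∈ Uminus → c ∈ U := by
      intro c hc
      rw [hUm, Subgroup.mem_iInf] at hc
      have := hc 0
      rw [Subgroup.mem_map] at this
      obtain ⟨y, hy, hconj⟩ := this
      have : y = c := by
        simpa [MulAut.conj_apply] using hconj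
      rwa [← this]
    exact U.mul_mem (hUple a ha) (hUmle b hb)
end
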